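/- If R is a prime right almost perfect ring, then R is h-local. -/

import Mathlib

universe u

/-- A ring is *right perfect* if it satisfies the descending chain condition
on principal left ideals. -/
def IsRightPerfectRing (R : Type u) [Ring R] : Prop :=
  ∀ f : ℕ → R, (∀ n, Ideal.span {f (n + 1)} ≤ Ideal.span {f n}) →
    ∃ N, ∀ n, N ≤ n → Ideal.span {f n} = Ideal.span {f N}

/-- A ring is *right almost perfect* if `R/I` is right perfect for every
two-sided ideal `I` with `0 ≠ I ≠ R`. -/
def IsRightAlmostPerfectRing (R : Type u) [Ring R] : Prop :=
  ∀ I : TwoSidedIdeal R, I ≠ ⊥ → I ≠ ⊤ → IsRightPerfectRing I.ringCon.Quotient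

/-- A ring is *prime* if `I * J = 0` implies `I = 0` or `J = 0` for two-sided ideals. -/
def IsPrimeRing (R : Type u) [Ring R] : Prop :=
  ∀ I J : TwoSidedIdeal R, (∀ a ∈ I, ∀ b ∈ J, a * b = 0) → I = ⊥ ∨ J = ⊥

/-- A ring is *semilocal* if it is semisimple modulo its Jacobson radical. -/
def IsSemilocalRing (R : Type u) [Ring R] : Prop :=
  IsSemisimpleModule R (R ⧸ Ideal.jacobson (⊥ : Ideal R))

/-- A two-sided ideal `P ≠ R` is *prime* if `I * J ⊆ P` implies `I ⊆ P` or `J ⊆ P`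
for all two-sided ideals `I`, `J`. -/
def TwoSidedIdeal.IsPrimeTwoSided {R : Type u} [Ring R] (P : TwoSidedIdeal R) : Prop :=
  P ≠ ⊤ ∧ ∀ I J : TwoSidedIdeal R, (∀ a ∈ I, ∀ b ∈ J, a * b ∈ P) → I ≤ P ∨ J ≤ P

/-- A (prime) ring is *h-local* if all proper quotients by nonzero two-sided ideals are
semilocal and every nonzero prime two-sided ideal is contained in exactly one maximal
two-sided ideal. -/
def IsHLocalRing (R : Type u) [Ring R] : Prop :=
  (∀ I : TwoSidedIdeal R, I ≠ ⊥ → I ≠ ⊤ → IsSemilocalRing I.ringCon.Quotient) ∧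
  (∀ P : TwoSidedIdeal R, P ≠ ⊥ → P.IsPrimeTwoSided →
    ∃! M : TwoSidedIdeal R, IsCoatom M ∧ P ≤ M)

namespace HLocalAux

variable {S : Type u} [Ring S]

/-- Characterization of the Jacobson radical via left invertibility. -/
lemma mem_jacobson_bot_iff {x : S} :
    x ∈ Ideal.jacobson (⊥ : Ideal S) ↔ ∀ y : S, ∃ u, u * (1 - y * x) = 1 := by
  constructor
  · intro hx y
    by_contra h
    push_neg at h
    have hne : Ideal.span {1 - y * x} ≠ ⊤ := by
      intro htop
      have h1 : (1 : S) ∈ Ideal.span {1 - y * x} := htop ▸ Submodule.mem_top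
      obtain ⟨u, hu⟩ := Submodule.mem_span_singleton.1 h1
      exact h u hu
    obtain ⟨M, hM, hle⟩ := Ideal.exists_le_maximal _ hne
    have hxM : x ∈ M := Ideal.mem_sInf.1 hx ⟨bot_le, hM⟩
    have h1M : (1 : S) ∈ M := by
      have := M.add_mem (hle (Ideal.subset_span rfl)) (M.mul_mem_left y hxM)
      simpa using this
    exact hM.ne_top ((Ideal.eq_top_iff_one _).2 h1M)
  · intro h
    refine Ideal.mem_sInf.2 ?_
    rintro M ⟨-, hM⟩
    by_contra hxM
    have htop : M ⊔ Ideal.span {x} = ⊤ := by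
      refine (Ideal.isMaximal_def.1 hM).2 _ (lt_of_le_of_ne le_sup_left ?_)
      intro he
      exact hxM (by rw [he]; exact Submodule.mem_sup_right (Submodule.mem_span_singleton_self x))
    have h1 : (1 : S) ∈ M ⊔ Ideal.span {x} := htop ▸ Submodule.mem_top
    obtain ⟨p, hp, q, hq, hpq⟩ := Submodule.mem_sup.1 h1
    obtain ⟨s, rfl⟩ := Submodule.mem_span_singleton.1 hq
    obtain ⟨u, hu⟩ := h s
    have hps : p = 1 - s * x := by
      have h2 := hpq
      rw [smul_eq_mul] at h2
      linear_combination (norm := noncomm_ring) h2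
    have h1M : (1 : S) ∈ M := by
      have h3 : u * p ∈ M := M.mul_mem_left u hp
      rwa [hps, hu] at h3
    exact hM.ne_top ((Ideal.eq_top_iff_one _).2 h1M)

lemma jacobson_bot_mul_mem {x : S} (hx : x ∈ Ideal.jacobson (⊥ : Ideal S)) (r : S) :
    x * r ∈ Ideal.jacobson (⊥ : Ideal S) := by
  rw [mem_jacobson_bot_iff] at hx ⊢
  intro y
  obtain ⟨u, hu⟩ := hx (r * y)
  refine ⟨1 + (y * x) * u * r, ?_⟩
  calc (1 + (y * x) * u * r) * (1 - y * (x * r))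
      = 1 - (y*x) * r + (y*x) * (u * (1 - (r*y) * x)) * r := by noncomm_ring
    _ = 1 := by rw [hu]; noncomm_ring

/-- DCC on cyclic submodules of quotients `S ⧸ N`. -/
lemma dcc_cyclic_quot (hS : IsRightPerfectRing S) (N : Ideal S) (g : ℕ → S ⧸ N)
    (hg : ∀ n, g (n + 1) ∈ Submodule.span S {g n}) :
    ∃ K, ∀ n, K ≤ n → Submodule.span S {g n} = Submodule.span S {g K} := by
  have hr : ∀ n, ∃ r : S, r • g n = g (n + 1) := fun n => Submodule.mem_span_singleton.1 (hg n)
  choose r hrspec using hr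
  obtain ⟨z0, hz0⟩ := Submodule.Quotient.mk_surjective N (g 0)
  set z : ℕ → S := fun n => Nat.rec z0 (fun n zn => r n * zn) n with hzdef
  have hz : ∀ n, Submodule.Quotient.mk (z n) = g n := by
    intro n
    induction n with
    | zero => exact hz0
    | succ n ih =>
      show Submodule.Quotient.mk (r n * z n) = g (n + 1)
      rw [← hrspec n, ← ih, ← Submodule.Quotient.mk_smul, smul_eq_mul]
  obtain ⟨K, hK⟩ := hS z (fun n => Submodule.span_le.2 (Set.singleton_subset_iff.2
    (Submodule.mem_span_singleton.2 ⟨r n, rfl⟩)))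
  have hmap : ∀ m, Submodule.span S {g m} = Submodule.map N.mkQ (Ideal.span {z m}) := by
    intro m
    rw [Ideal.span, Submodule.map_span, Set.image_singleton, Submodule.mkQ_apply, hz]
  exact ⟨K, fun n hn => by rw [hmap n, hmap K, hK n hn]⟩

/-- Every nonzero submodule of a quotient of `S` contains an atom. -/
lemma exists_atom_le (hS : IsRightPerfectRing S) (N : Ideal S)
    (W : Submodule S (S ⧸ N)) (hW : W ≠ ⊥) :
    ∃ L : Submodule S (S ⧸ N), IsAtom L ∧ L ≤ W := by
  by_contra hcon
  push_neg at hcon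
  have step : ∀ x : S ⧸ N, x ≠ 0 → Submodule.span S {x} ≤ W →
      ∃ y : S ⧸ N, y ≠ 0 ∧ Submodule.span S {y} ≤ W ∧ y ∈ Submodule.span S {x} ∧
        Submodule.span S {y} < Submodule.span S {x} := by
    intro x hx hxW
    have hne : Submodule.span S {x} ≠ ⊥ := by
      rw [Ne, Submodule.span_singleton_eq_bot]; exact hx
    have hnotatom : ¬ IsAtom (Submodule.span S {x}) := fun h => hcon _ h hxW
    obtain ⟨b, hblt, hbne⟩ : ∃ b, b < Submodule.span S {x} ∧ b ≠ ⊥ := by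
      by_contra hb
      push_neg at hb
      exact hnotatom ⟨hne, hb⟩
    obtain ⟨y, hyb, hy0⟩ := (Submodule.ne_bot_iff b).1 hbne
    have hspanb : Submodule.span S {y} ≤ b := Submodule.span_le.2 (Set.singleton_subset_iff.2 hyb)
    exact ⟨y, hy0, (hspanb.trans hblt.le).trans hxW, hblt.le hyb,
      lt_of_le_of_lt hspanb hblt⟩
  obtain ⟨x0, hx0W, hx00⟩ := (Submodule.ne_bot_iff W).1 hW
  have hx0span : Submodule.span S {x0} ≤ W :=
    Submodule.span_le.2 (Set.singleton_subset_iff.2 hx0W)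
  choose nxt h0 hle hmem hlt using step
  set g : ℕ → {v : S ⧸ N // v ≠ 0 ∧ Submodule.span S {v} ≤ W} :=
    fun n => Nat.rec ⟨x0, hx00, hx0span⟩
      (fun _ p => ⟨nxt p.1 p.2.1 p.2.2, h0 p.1 p.2.1 p.2.2, hle p.1 p.2.1 p.2.2⟩) n with hgdef
  obtain ⟨K, hK⟩ := dcc_cyclic_quot hS N (fun n => (g n).1)
    (fun n => hmem (g n).1 (g n).2.1 (g n).2.2)
  have h1 := hK (K + 1) (Nat.le_succ K)
  exact absurd h1 (ne_of_lt (hlt (g K).1 (g K).2.1 (g K).2.2))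

lemma exists_coatom_not_mem {x : S ⧸ (Ideal.jacobson (⊥ : Ideal S))} (hx : x ≠ 0) :
    ∃ m : Submodule S (S ⧸ (Ideal.jacobson (⊥ : Ideal S))), IsCoatom m ∧ x ∉ m := by
  obtain ⟨a, rfl⟩ := Submodule.Quotient.mk_surjective _ x
  have haJ : a ∉ Ideal.jacobson (⊥ : Ideal S) :=
    fun h => hx ((Submodule.Quotient.mk_eq_zero _).2 h)
  obtain ⟨M, hM, haM⟩ : ∃ M : Ideal S, M.IsMaximal ∧ a ∉ M := by
    by_contra h
    push_neg at h
    exact haJ (Ideal.mem_sInf.2 fun I hI => h I hI.2)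
  have hJM : Ideal.jacobson (⊥ : Ideal S) ≤ M := sInf_le ⟨bot_le, hM⟩
  have hmem : ∀ b : S, Submodule.Quotient.mk b ∈
      Submodule.map (Ideal.jacobson (⊥ : Ideal S)).mkQ M ↔ b ∈ M := by
    intro b
    constructor
    · rintro ⟨c, hc, hcb⟩
      rw [Submodule.mkQ_apply] at hcb
      have h1 : c - b ∈ Ideal.jacobson (⊥ : Ideal S) := (Submodule.Quotient.eq _).1 hcb
      have h2 : b = c - (c - b) := (sub_sub_cancel c b).symm
      rw [h2]
      exact M.sub_mem hc (hJM h1)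
    · intro hb
      exact ⟨b, hb, Submodule.mkQ_apply _ b⟩
  refine ⟨Submodule.map (Ideal.jacobson (⊥ : Ideal S)).mkQ M, ⟨?_, ?_⟩,
    fun h => haM ((hmem a).1 h)⟩
  · intro htop
    have : (1 : S) ∈ M := (hmem 1).1 (htop ▸ Submodule.mem_top)
    exact hM.ne_top ((Ideal.eq_top_iff_one M).2 this)
  · intro m' hlt
    obtain ⟨u, hum', hum⟩ := SetLike.exists_of_lt hlt
    obtain ⟨u0, rfl⟩ := Submodule.Quotient.mk_surjective _ u
    have hu0M : u0 ∉ M := fun h => hum ((hmem u0).2 h)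
    have htop : M ⊔ Ideal.span {u0} = ⊤ := by
      refine (Ideal.isMaximal_def.1 hM).2 _ (lt_of_le_of_ne le_sup_left ?_)
      intro he
      exact hu0M (by rw [he]; exact Submodule.mem_sup_right (Submodule.mem_span_singleton_self u0))
    obtain ⟨p, hp, q, hq, hpq⟩ := Submodule.mem_sup.1 (htop ▸ (Submodule.mem_top : (1:S) ∈ ⊤))
    obtain ⟨s, rfl⟩ := Submodule.mem_span_singleton.1 hq
    have h1m' : Submodule.Quotient.mk (p := Ideal.jacobson (⊥ : Ideal S)) 1 ∈ m' := by
      rw [← hpq, Submodule.Quotient.mk_add]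
      refine m'.add_mem (hlt.le ((hmem p).2 hp)) ?_
      rw [Submodule.Quotient.mk_smul]
      exact m'.smul_mem s hum'
    refine Submodule.eq_top_iff'.2 fun v => ?_
    obtain ⟨v0, rfl⟩ := Submodule.Quotient.mk_surjective _ v
    have hv : Submodule.Quotient.mk (p := Ideal.jacobson (⊥ : Ideal S)) v0 =
        v0 • Submodule.Quotient.mk (p := Ideal.jacobson (⊥ : Ideal S)) 1 := by
      rw [← Submodule.Quotient.mk_smul, smul_eq_mul, mul_one]
    rw [hv]
    exact m'.smul_mem v0 h1m'

/-- Bass: a right perfect ring is semilocal. -/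
lemma perfect_isSemilocal (hS : IsRightPerfectRing S) : IsSemilocalRing S := by
  refine (isSemisimpleModule_iff _ _).2 ?_
  apply complementedLattice_of_sSup_atoms_eq_top
  set A := sSup {a : Submodule S (S ⧸ Ideal.jacobson (⊥ : Ideal S)) | IsAtom a} with hA
  have compl_atom : ∀ L : Submodule S (S ⧸ Ideal.jacobson (⊥ : Ideal S)), IsAtom L →
      ∃ m, IsCoatom m ∧ L ⊓ m = ⊥ ∧ L ⊔ m = ⊤ := by
    intro L hL
    obtain ⟨x, hxL, hx0⟩ := (Submodule.ne_bot_iff L).1 hL.1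
    obtain ⟨m, hm, hxm⟩ := exists_coatom_not_mem hx0
    have h1 : L ⊓ m = ⊥ := by
      refine hL.2 _ (lt_of_le_of_ne inf_le_left ?_)
      intro he
      exact hxm (inf_eq_left.1 he hxL)
    have h2 : L ⊔ m = ⊤ := by
      refine hm.2 _ (lt_of_le_of_ne le_sup_right ?_)
      intro he
      exact hxm (sup_eq_right.1 he.symm hxL)
    exact ⟨m, hm, h1, h2⟩
  have span_one : Submodule.span S
      {(Submodule.Quotient.mk 1 : S ⧸ Ideal.jacobson (⊥ : Ideal S))} = ⊤ := by
    refine Submodule.eq_top_iff'.2 fun v => ?_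
    obtain ⟨v0, rfl⟩ := Submodule.Quotient.mk_surjective _ v
    refine Submodule.mem_span_singleton.2 ⟨v0, ?_⟩
    rw [← Submodule.Quotient.mk_smul, smul_eq_mul, mul_one]
  have step : ∀ y : S ⧸ Ideal.jacobson (⊥ : Ideal S), Submodule.span S {y} ⊔ A = ⊤ →
      ∃ y', (Submodule.span S {y'} ⊔ A = ⊤) ∧ y' ∈ Submodule.span S {y} ∧
        (Submodule.span S {y} ≠ ⊥ → Submodule.span S {y'} < Submodule.span S {y}) := by
    intro y hy
    by_cases hbot : Submodule.span S {y} = ⊥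
    · exact ⟨y, hy, Submodule.mem_span_singleton_self y, fun h => absurd hbot h⟩
    · obtain ⟨L, hL, hLle⟩ := exists_atom_le hS _ _ hbot
      obtain ⟨m, hm, hinf, hsup⟩ := compl_atom L hL
      have hmod : Submodule.span S {y} = L ⊔ (m ⊓ Submodule.span S {y}) := by
        rw [← sup_inf_assoc_of_le _ hLle, hsup, top_inf_eq]
      obtain ⟨l, hl, y', hy', hsplit⟩ :=
        Submodule.mem_sup.1 (hmod ▸ Submodule.mem_span_singleton_self y)
      have hspan_eq : Submodule.span S {y'} = m ⊓ Submodule.span S {y} := by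
        refine le_antisymm (Submodule.span_le.2 (Set.singleton_subset_iff.2 hy')) ?_
        intro x hx
        obtain ⟨hxm, hxC⟩ := Submodule.mem_inf.1 hx
        obtain ⟨r, hr⟩ := Submodule.mem_span_singleton.1 hxC
        have hrl : x - r • y' = r • l := by
          rw [← hr, ← hsplit, smul_add]; abel
        have hmem1 : x - r • y' ∈ m ⊓ Submodule.span S {y} :=
          Submodule.sub_mem _ hx ((m ⊓ Submodule.span S {y}).smul_mem r hy')
        have hmem2 : x - r • y' ∈ L := hrl ▸ L.smul_mem r hl
        have hmem3 : x - r • y' ∈ L ⊓ m := Submodule.mem_inf.2 ⟨hmem2, (Submodule.mem_inf.1 hmem1).1⟩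
        rw [hinf] at hmem3
        have hx' : x = r • y' := by
          have h0 := (Submodule.mem_bot S).1 hmem3
          rwa [sub_eq_zero] at h0
        rw [hx']
        exact Submodule.mem_span_singleton.2 ⟨r, rfl⟩
      have hLA : L ≤ A := le_sSup hL
      have hinv : Submodule.span S {y'} ⊔ A = ⊤ := by
        rw [hspan_eq]
        refine top_le_iff.1 ?_
        calc (⊤ : Submodule S (S ⧸ Ideal.jacobson (⊥ : Ideal S)))
            = Submodule.span S {y} ⊔ A := hy.symm
          _ = (L ⊔ (m ⊓ Submodule.span S {y})) ⊔ A := by rw [← hmod]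
          _ ≤ (m ⊓ Submodule.span S {y}) ⊔ A :=
              sup_le (sup_le (hLA.trans le_sup_right) le_sup_left) le_sup_right
      have hlt' : Submodule.span S {y'} < Submodule.span S {y} := by
        rw [hspan_eq]
        refine lt_of_le_of_ne inf_le_right ?_
        intro he
        have hCm : Submodule.span S {y} ≤ m := inf_eq_right.1 he
        exact hL.1 ((inf_eq_left.2 (hLle.trans hCm)).symm.trans hinf)
      exact ⟨y', hinv, (Submodule.mem_inf.1 hy').2, fun _ => hlt'⟩
  choose nxt hinvf hmemf hstrictf using step
  have h1top : Submodule.span S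
      {(Submodule.Quotient.mk 1 : S ⧸ Ideal.jacobson (⊥ : Ideal S))} ⊔ A = ⊤ := by
    rw [span_one, top_sup_eq]
  set g : ℕ → {y : S ⧸ Ideal.jacobson (⊥ : Ideal S) // Submodule.span S {y} ⊔ A = ⊤} :=
    fun n => Nat.rec ⟨_, h1top⟩ (fun _ p => ⟨nxt p.1 p.2, hinvf p.1 p.2⟩) n with hgdef
  obtain ⟨K, hK⟩ := dcc_cyclic_quot hS _ (fun n => (g n).1) (fun n => hmemf (g n).1 (g n).2)
  have heq := hK (K + 1) (Nat.le_succ K)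
  by_cases hb : Submodule.span S {(g K).1} = ⊥
  · have h2 := (g K).2
    rwa [hb, bot_sup_eq] at h2
  · exact absurd heq (ne_of_lt (hstrictf (g K).1 (g K).2 hb))

/-- Element-wise consequence of primeness of a two-sided ideal. -/
lemma prime_elem {R : Type u} [Ring R] {P : TwoSidedIdeal R} (hP : P.IsPrimeTwoSided)
    {a b : R} (h : ∀ r, a * r * b ∈ P) : a ∈ P ∨ b ∈ P := by
  set Ia : TwoSidedIdeal R := TwoSidedIdeal.mk' {x | ∀ r, x * r * b ∈ P}
    (fun r => by simpa using P.zero_mem)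
    (fun {x y} hx hy r => by rw [add_mul, add_mul]; exact P.add_mem (hx r) (hy r))
    (fun {x} hx r => by rw [neg_mul, neg_mul]; exact P.neg_mem (hx r))
    (fun {x y} hy r => by
      rw [mul_assoc x y r, mul_assoc x (y*r) b]; exact P.mul_mem_left x _ (hy r))
    (fun {x y} hx r => by rw [mul_assoc x y r]; exact hx (y * r)) with hIa
  set Jb : TwoSidedIdeal R := TwoSidedIdeal.mk' {x | ∀ u, (∀ r, u * r * b ∈ P) → u * x ∈ P}
    (fun u _ => by simpa using P.zero_mem)
    (fun {x y} hx hy u hu => by rw [mul_add]; exact P.add_mem (hx u hu) (hy u hu))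
    (fun {x} hx u hu => by rw [mul_neg]; exact P.neg_mem (hx u hu))
    (fun {x y} hy u hu => by
      rw [← mul_assoc]
      exact hy (u * x) (fun r => by rw [mul_assoc u x r]; exact hu (x * r)))
    (fun {x y} hx u hu => by rw [← mul_assoc]; exact P.mul_mem_right _ y (hx u hu)) with hJb
  have hprod : ∀ u ∈ Ia, ∀ v ∈ Jb, u * v ∈ P := by
    intro u hu v hv
    rw [hIa, TwoSidedIdeal.mem_mk'] at hu
    rw [hJb, TwoSidedIdeal.mem_mk'] at hv
    exact hv u hu
  rcases hP.2 Ia Jb hprod with hle | hle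
  · left
    refine hle ?_
    rw [hIa, TwoSidedIdeal.mem_mk']
    exact h
  · right
    refine hle ?_
    rw [hJb, TwoSidedIdeal.mem_mk']
    intro u hu
    have := hu 1
    rwa [mul_one] at this

end HLocalAux

/-- If `R` is a prime right almost perfect ring, then `R` is h-local. -/
theorem stmt3 {R : Type u} [Ring R] (h1 : IsPrimeRing R)
    (h2 : IsRightAlmostPerfectRing R) : IsHLocalRing R := by
  constructor
  · intro I hbot htop
    exact HLocalAux.perfect_isSemilocal (h2 I hbot htop)
  · intro P hPbot hPprime
    have hQperf : IsRightPerfectRing P.ringCon.Quotient := h2 P hPbot hPprime.1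
    have qsurj : ∀ q : P.ringCon.Quotient, ∃ x : R, (x : P.ringCon.Quotient) = q :=
      fun q => Quotient.inductionOn q fun x => ⟨x, rfl⟩
    have hz : ∀ x : R, ((x : P.ringCon.Quotient) = 0) ↔ x ∈ P := by
      intro x
      rw [← RingCon.coe_zero, RingCon.eq, TwoSidedIdeal.rel_iff, sub_zero]
    have qprime : ∀ x y : P.ringCon.Quotient, (∀ r : P.ringCon.Quotient, x * r * y = 0) →
        x = 0 ∨ y = 0 := by
      intro x y hxy
      obtain ⟨x0, rfl⟩ := qsurj x
      obtain ⟨y0, rfl⟩ := qsurj y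
      have hmem : ∀ r : R, x0 * r * y0 ∈ P := by
        intro r
        have h3 := hxy (r : P.ringCon.Quotient)
        rw [← RingCon.coe_mul, ← RingCon.coe_mul] at h3
        exact (hz _).1 h3
      rcases HLocalAux.prime_elem hPprime hmem with h | h
      · exact Or.inl ((hz _).2 h)
      · exact Or.inr ((hz _).2 h)
    have hJbot : Ideal.jacobson (⊥ : Ideal P.ringCon.Quotient) = ⊥ := by
      by_contra hne
      obtain ⟨x0, hx0J, hx00⟩ := (Submodule.ne_bot_iff _).1 hne
      have step : ∀ c : P.ringCon.Quotient, c ≠ 0 →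
          ∃ a, a ∈ Ideal.jacobson (⊥ : Ideal P.ringCon.Quotient) ∧ a * c ≠ 0 := by
        intro c hc
        by_contra hall
        push_neg at hall
        have hall2 : ∀ r : P.ringCon.Quotient, x0 * r * c = 0 := fun r =>
          hall (x0 * r) (HLocalAux.jacobson_bot_mul_mem hx0J r)
        rcases qprime x0 c hall2 with h | h
        exacts [hx00 h, hc h]
      choose nxt hnJ hn0 using step
      set f : ℕ → {c : P.ringCon.Quotient // c ≠ 0} :=
        fun n => Nat.rec ⟨x0, hx00⟩ (fun _ p => ⟨nxt p.1 p.2 * p.1, hn0 p.1 p.2⟩) n with hfdef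
      obtain ⟨K, hK⟩ := hQperf (fun n => (f n).1) (fun n => Submodule.span_le.2
        (Set.singleton_subset_iff.2 (Submodule.mem_span_singleton.2
          ⟨nxt (f n).1 (f n).2, by rw [smul_eq_mul]⟩)))
      have heq := hK (K + 1) (Nat.le_succ K)
      have hmem : (f K).1 ∈ Ideal.span {(f (K + 1)).1} := by
        rw [heq]
        exact Submodule.mem_span_singleton_self _
      obtain ⟨u, hu⟩ := Submodule.mem_span_singleton.1 hmem
      have hfk : (f (K + 1)).1 = nxt (f K).1 (f K).2 * (f K).1 := rfl
      rw [hfk, smul_eq_mul] at hu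
      have huaJ : u * nxt (f K).1 (f K).2 ∈ Ideal.jacobson (⊥ : Ideal P.ringCon.Quotient) :=
        Submodule.smul_mem _ u (hnJ (f K).1 (f K).2)
      obtain ⟨v, hv⟩ := HLocalAux.mem_jacobson_bot_iff.1 huaJ 1
      have hc0 : (f K).1 = 0 := by
        have h0 : (1 - 1 * (u * nxt (f K).1 (f K).2)) * (f K).1 = 0 := by
          rw [one_mul, sub_mul, one_mul, mul_assoc, hu, sub_self]
        calc (f K).1 = 1 * (f K).1 := (one_mul _).symm
          _ = (v * (1 - 1 * (u * nxt (f K).1 (f K).2))) * (f K).1 := by rw [hv]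
          _ = v * ((1 - 1 * (u * nxt (f K).1 (f K).2)) * (f K).1) := by rw [mul_assoc]
          _ = 0 := by rw [h0, mul_zero]
      exact (f K).2 hc0
    have hss : IsSemisimpleModule P.ringCon.Quotient
        (P.ringCon.Quotient ⧸ Ideal.jacobson (⊥ : Ideal P.ringCon.Quotient)) :=
      HLocalAux.perfect_isSemilocal hQperf
    rw [hJbot] at hss
    haveI := hss
    have hssQ : IsSemisimpleModule P.ringCon.Quotient P.ringCon.Quotient :=
      IsSemisimpleModule.congr (Submodule.quotEquivOfEqBot (⊥ : Ideal P.ringCon.Quotient) rfl).symm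
    have hPcoatom : IsCoatom P := by
      refine ⟨hPprime.1, fun I hI => ?_⟩
      by_contra hItop
      have hPI : P ≤ I := hI.le
      have h1I : (1 : R) ∉ I := fun h => hItop (I.eq_top h)
      -- the image of I as a left ideal of the quotient ring
      set Ibar : Submodule P.ringCon.Quotient P.ringCon.Quotient :=
        { carrier := {q | ∃ z : R, z ∈ I ∧ (z : P.ringCon.Quotient) = q}
          add_mem' := by
            rintro x y ⟨z1, hz1, rfl⟩ ⟨z2, hz2, rfl⟩
            exact ⟨z1 + z2, I.add_mem hz1 hz2, RingCon.coe_add P.ringCon z1 z2⟩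
          zero_mem' := ⟨0, I.zero_mem, RingCon.coe_zero P.ringCon⟩
          smul_mem' := by
            rintro r x ⟨z, hzI, rfl⟩
            obtain ⟨s, rfl⟩ := qsurj r
            exact ⟨s * z, I.mul_mem_left s z hzI, by rw [RingCon.coe_mul, smul_eq_mul]⟩ } with hIbar
      have hIbar_ne_top : Ibar ≠ ⊤ := by
        intro h
        have hmem1 : ((1 : R) : P.ringCon.Quotient) ∈ Ibar := h ▸ Submodule.mem_top
        obtain ⟨w, hwI, hw1⟩ := hmem1
        have hw : w - 1 ∈ P := by rwa [RingCon.eq, TwoSidedIdeal.rel_iff] at hw1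
        have : (1 : R) ∈ I := by
          have h2 : (1 : R) = w - (w - 1) := (sub_sub_cancel w 1).symm
          rw [h2]
          exact I.sub_mem hwI (hPI hw)
        exact h1I this
      haveI := hssQ
      obtain ⟨C, hC⟩ := exists_isCompl Ibar
      have hCne : C ≠ ⊥ := by
        intro h
        apply hIbar_ne_top
        have h3 := hC.sup_eq_top
        rwa [h, sup_bot_eq] at h3
      obtain ⟨cbar, hcbarC, hcbar0⟩ := (Submodule.ne_bot_iff C).1 hCne
      obtain ⟨c0, rfl⟩ := qsurj cbar
      have hc0P : c0 ∉ P := fun h => hcbar0 ((hz c0).2 h)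
      have hBc : ∀ z ∈ I, z * c0 ∈ P := by
        intro z hzI
        have hm1 : ((z * c0 : R) : P.ringCon.Quotient) ∈ Ibar :=
          ⟨z * c0, I.mul_mem_right z c0 hzI, rfl⟩
        have hm2 : ((z * c0 : R) : P.ringCon.Quotient) ∈ C := by
          rw [RingCon.coe_mul, ← smul_eq_mul]
          exact C.smul_mem _ hcbarC
        have hm3 : ((z * c0 : R) : P.ringCon.Quotient) ∈ Ibar ⊓ C :=
          Submodule.mem_inf.2 ⟨hm1, hm2⟩
        rw [disjoint_iff.1 hC.disjoint] at hm3
        exact (hz _).1 ((Submodule.mem_bot _).1 hm3)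
      set B : TwoSidedIdeal R := TwoSidedIdeal.mk' {x | ∀ z ∈ I, z * x ∈ P}
        (fun z _ => by simpa using P.zero_mem)
        (fun {x y} hx hy z hzI => by rw [mul_add]; exact P.add_mem (hx z hzI) (hy z hzI))
        (fun {x} hx z hzI => by rw [mul_neg]; exact P.neg_mem (hx z hzI))
        (fun {x y} hy z hzI => by
          rw [← mul_assoc]; exact hy (z * x) (I.mul_mem_right z x hzI))
        (fun {x y} hx z hzI => by rw [← mul_assoc]; exact P.mul_mem_right _ y (hx z hzI)) with hB
      have hprod : ∀ u ∈ I, ∀ v ∈ B, u * v ∈ P := by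
        intro u hu v hv
        rw [hB, TwoSidedIdeal.mem_mk'] at hv
        exact hv u hu
      rcases hPprime.2 I B hprod with h | h
      · exact absurd h hI.not_ge
      · refine hc0P (h ?_)
        rw [hB, TwoSidedIdeal.mem_mk']
        exact hBc
    refine ⟨P, ⟨hPcoatom, le_refl P⟩, fun M hM => ?_⟩
    rcases (lt_or_eq_of_le hM.2) with hlt | heq
    · exact absurd (hPcoatom.2 M hlt) hM.1.1
    · exact heq.symm
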